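/- Let P be a set of n = 2m+1 points in convex position. Then any plane almost perfect matching on P can be transformed by at most 2n flips into the matching M_conv all of whose edges are edges of the convex hull boundary; consequently the diameter of the flip graph GM_P is O(n). -/

import Mathlib

open Finset

abbrev Pt : Type := ℝ × ℝ

def NoThreeCollinear (P : Finset Pt) : Prop :=
  ∀ p ∈ P, ∀ q ∈ P, ∀ r ∈ P, p ≠ q → p ≠ r → q ≠ r →
    ¬ Collinear ℝ ({p, q, r} : Set Pt)

/-- The open segment associated to an unordered pair of points. -/
def eseg (e : Sym2 Pt) : Set Pt :=
  Sym2.lift ⟨fun p q => openSegment ℝ p q, fun p q => openSegment_symm (𝕜 := ℝ) p q⟩ e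

/-- `M` is a plane almost perfect matching with `m` edges on the point set `P`:
`m` segments with pairwise distinct endpoints in `P`, no two of which cross. -/
structure IsPAPM (P : Finset Pt) (m : ℕ) (M : Finset (Sym2 Pt)) : Prop where
  card_eq : M.card = m
  endpoints_mem : ∀ e ∈ M, ∀ p ∈ e, p ∈ P
  not_isDiag : ∀ e ∈ M, ¬ e.IsDiag
  pairwise_disjoint_endpoints : ∀ e ∈ M, ∀ f ∈ M, e ≠ f → ∀ p, p ∈ e → p ∉ f
  plane : ∀ e ∈ M, ∀ f ∈ M, e ≠ f → eseg e ∩ eseg f = ∅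

/-- `p` is the unmatched point of the matching `M` on `P`. -/
def Unmatched (P : Finset Pt) (M : Finset (Sym2 Pt)) (p : Pt) : Prop :=
  p ∈ P ∧ ∀ e ∈ M, p ∉ e

/-- The flip graph `GM_P`: vertices are the plane almost perfect matchings on `P`,
two matchings being adjacent iff they share exactly `m - 1` edges. -/
def GM (P : Finset Pt) (m : ℕ) : SimpleGraph {M : Finset (Sym2 Pt) // IsPAPM P m M} where
  Adj M₁ M₂ := M₁ ≠ M₂ ∧ (M₁.1 ∩ M₂.1).card = m - 1
  symm := by
    constructor
    intro a b h
    exact ⟨h.1.symm, by rw [Finset.inter_comm]; exact h.2⟩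
  loopless := ⟨fun a h => h.1 rfl⟩

/-- A finite point set is in convex position if no point lies in the
convex hull of the others. -/
def ConvexPosition (P : Finset Pt) : Prop :=
  ∀ p ∈ P, p ∉ convexHull ℝ ((P.erase p : Finset Pt) : Set Pt)

def orient (a b c : Pt) : ℝ := (b.1-a.1)*(c.2-a.2) - (b.2-a.2)*(c.1-a.1)

lemma collinear_of_orient_eq_zero {a b c : Pt} (h : orient a b c = 0) :
    Collinear ℝ ({a, b, c} : Set Pt) := by
  rcases eq_or_ne b a with hba | hba
  · exact Collinear.subset
      (by intro x hx; rcases hx with rfl|rfl|rfl <;> simp [hba])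
      (collinear_pair ℝ a c)
  rw [collinear_iff_exists_forall_eq_smul_vadd]
  refine ⟨a, b - a, ?_⟩
  have key : ∀ p : Pt, orient a b p = 0 → ∃ r : ℝ, p = r • (b - a) +ᵥ a := by
    intro p hp
    unfold orient at hp
    rcases eq_or_ne b.1 a.1 with h1 | h1
    · have h2 : b.2 - a.2 ≠ 0 := by
        intro h2
        exact hba (Prod.ext h1 (by linarith))
      refine ⟨(p.2 - a.2)/(b.2 - a.2), ?_⟩
      have hc1 : p.1 = a.1 := by
        rw [h1] at hp
        have h0 : (b.2 - a.2) * (p.1 - a.1) = 0 := by linarith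
        rcases mul_eq_zero.1 h0 with h' | h'
        · exact absurd h' h2
        · linarith
      rw [show ((p.2 - a.2)/(b.2 - a.2)) • (b - a) +ᵥ a
          = ((p.2 - a.2)/(b.2 - a.2)*(b.1-a.1)+a.1, (p.2 - a.2)/(b.2 - a.2)*(b.2-a.2)+a.2)
          from rfl]
      refine Prod.ext ?_ ?_
      · simp only []
        rw [h1]
        simpa using hc1
      · simp only []
        field_simp
        ring
    · have h1' : b.1 - a.1 ≠ 0 := sub_ne_zero.2 h1
      refine ⟨(p.1 - a.1)/(b.1 - a.1), ?_⟩
      rw [show ((p.1 - a.1)/(b.1 - a.1)) • (b - a) +ᵥ a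
          = ((p.1 - a.1)/(b.1 - a.1)*(b.1-a.1)+a.1, (p.1 - a.1)/(b.1 - a.1)*(b.2-a.2)+a.2)
          from rfl]
      refine Prod.ext ?_ ?_
      · simp only []
        field_simp
        ring
      · simp only []
        rw [div_mul_eq_mul_div, eq_comm, div_add' _ _ _ h1', div_eq_iff h1']
        nlinarith [hp]
  intro p hp
  rcases hp with rfl | rfl | rfl
  · exact key p (by unfold orient; ring)
  · exact key p (by unfold orient; ring)
  · exact key p h

lemma mem_triangle {a b c x : Pt} (h1 : 0 < orient x b c) (h2 : 0 < orient a x c)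
    (h3 : 0 < orient a b x) : x ∈ convexHull ℝ ({a, b, c} : Set Pt) := by
  set o1 := orient x b c with ho1
  set o2 := orient a x c with ho2
  set o3 := orient a b x with ho3
  have hDpos : 0 < o1 + o2 + o3 := by positivity
  have h23 : 0 < o2 + o3 := by positivity
  have hne : o1 + o2 + o3 ≠ 0 := ne_of_gt hDpos
  have hne2 : o2 + o3 ≠ 0 := ne_of_gt h23
  have ha : a ∈ convexHull ℝ ({a, b, c} : Set Pt) := subset_convexHull ℝ _ (by simp)
  have hb : b ∈ convexHull ℝ ({a, b, c} : Set Pt) := subset_convexHull ℝ _ (by simp)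
  have hc : c ∈ convexHull ℝ ({a, b, c} : Set Pt) := subset_convexHull ℝ _ (by simp)
  have hcx : Convex ℝ (convexHull ℝ ({a, b, c} : Set Pt)) := convex_convexHull ℝ _
  have hz : (o2/(o2+o3)) • b + (o3/(o2+o3)) • c ∈ convexHull ℝ ({a, b, c} : Set Pt) :=
    hcx hb hc (by positivity) (by positivity) (by field_simp)
  have key : ∀ w1 w2 w3 t : ℝ, (o1+o2+o3)*t = o1*w1+o2*w2+o3*w3 →
      t = o1/(o1+o2+o3)*w1 + (1 - o1/(o1+o2+o3))*(o2/(o2+o3)*w2 + o3/(o2+o3)*w3) := by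
    intro w1 w2 w3 t ht
    have ht' : t = (o1*w1+o2*w2+o3*w3)/(o1+o2+o3) := by rw [eq_div_iff hne]; linarith
    rw [ht']; field_simp; ring
  have hx : x = (o1/(o1+o2+o3)) • a
      + (1 - o1/(o1+o2+o3)) • ((o2/(o2+o3)) • b + (o3/(o2+o3)) • c) := by
    have e1 : (o1+o2+o3) * x.1 = o1 * a.1 + o2 * b.1 + o3 * c.1 := by
      rw [ho1, ho2, ho3]; unfold orient; ring
    have e2 : (o1+o2+o3) * x.2 = o1 * a.2 + o2 * b.2 + o3 * c.2 := by
      rw [ho1, ho2, ho3]; unfold orient; ring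
    refine Prod.ext ?_ ?_ <;>
      simp only [Prod.fst_add, Prod.snd_add, Prod.smul_fst, Prod.smul_snd, smul_eq_mul]
    · exact key _ _ _ _ e1
    · exact key _ _ _ _ e2
  rw [hx]
  have hl1 : 0 ≤ o1/(o1+o2+o3) := by positivity
  have hl2 : o1/(o1+o2+o3) ≤ 1 := by
    rw [div_le_one hDpos]; linarith
  exact hcx ha hz hl1 (by linarith) (by ring)

lemma orient_combo (a b x y : Pt) (t s : ℝ) (hts : t + s = 1) :
    orient a b (t • x + s • y) = t * orient a b x + s * orient a b y := by
  have hs : s = 1 - t := by linarith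
  subst hs
  rw [show (t • x + (1-t) • y : Pt)
      = (t*x.1+(1-t)*y.1, t*x.2+(1-t)*y.2) from rfl]
  unfold orient
  ring

lemma disjoint_of_side {a b c d : Pt}
    (h : (0 < orient a b c ∧ 0 < orient a b d) ∨ (orient a b c < 0 ∧ orient a b d < 0)) :
    openSegment ℝ a b ∩ openSegment ℝ c d = ∅ := by
  ext x
  simp only [Set.mem_inter_iff, Set.mem_empty_iff_false, iff_false, not_and]
  intro hab hcd
  obtain ⟨t1, s1, ht1, hs1, hts1, rfl⟩ := hab
  obtain ⟨t2, s2, ht2, hs2, hts2, hx⟩ := hcd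
  have h1 : orient a b (t1 • a + s1 • b) = 0 := by
    rw [orient_combo a b a b t1 s1 hts1]
    unfold orient; ring_nf
  have h2 : orient a b (t1 • a + s1 • b) = t2 * orient a b c + s2 * orient a b d := by
    rw [← hx, orient_combo a b c d t2 s2 hts2]
  rcases h with ⟨hc, hd⟩ | ⟨hc, hd⟩
  · nlinarith
  · nlinarith

lemma openSegment_subset_frontier {P : Finset Pt} {a b : Pt} (ha : a ∈ P) (hb : b ∈ P)
    (hab : a ≠ b) (hside : ∀ q ∈ P, q ≠ a → q ≠ b → 0 < orient a b q) :
    openSegment ℝ a b ⊆ frontier (convexHull ℝ (P : Set Pt)) := by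
  intro x hx
  have hhull : x ∈ convexHull ℝ (P : Set Pt) := by
    have hconv : Convex ℝ (convexHull ℝ (P : Set Pt)) := convex_convexHull ℝ _
    exact hconv.openSegment_subset (subset_convexHull ℝ _ ha) (subset_convexHull ℝ _ hb) hx
  have hclosed : IsClosed (convexHull ℝ (P : Set Pt)) :=
    (P.finite_toSet).isClosed_convexHull (𝕜 := ℝ)
  rw [hclosed.frontier_eq]
  refine ⟨hhull, ?_⟩
  -- x is not in the interior: the affine functional orient a b · vanishes at x
  -- but is ≥ 0 on the hull
  intro hint
  have hLx : orient a b x = 0 := by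
    obtain ⟨t, s, ht, hs, hts, rfl⟩ := hx
    rw [orient_combo a b a b t s hts]
    unfold orient; ring_nf
  -- hull ⊆ {orient ≥ 0}
  have hhalf : convexHull ℝ (P : Set Pt) ⊆ {y : Pt | 0 ≤ orient a b y} := by
    apply convexHull_min
    · intro q hq
      rcases eq_or_ne q a with rfl | hqa
      · simp [Set.mem_setOf_eq, orient]
      rcases eq_or_ne q b with rfl | hqb
      · simp only [Set.mem_setOf_eq, orient]
        nlinarith [mul_comm (q.2 - a.2) (q.1 - a.1)]
      · exact le_of_lt (hside q hq hqa hqb)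
    · intro y hy z hz t s ht hs hts
      simp only [Set.mem_setOf_eq] at *
      rw [orient_combo a b y z t s hts]
      positivity
  -- direction of strict decrease
  set v : Pt := (-(b.2-a.2), b.1-a.1) with hv
  have hLv : ∀ (ε : ℝ), orient a b (x - ε • v) = orient a b x - ε * ((b.1-a.1)^2 + (b.2-a.2)^2) := by
    intro ε
    unfold orient
    simp only [hv, Prod.fst_sub, Prod.snd_sub, Prod.smul_fst, Prod.smul_snd, smul_eq_mul]
    ring
  have hvpos : 0 < (b.1-a.1)^2 + (b.2-a.2)^2 := by
    rcases eq_or_ne b.1 a.1 with h1 | h1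
    · have h2 : b.2 ≠ a.2 := fun h2 => hab (Prod.ext h1.symm h2.symm)
      have hp : 0 < (b.2-a.2)*(b.2-a.2) := mul_self_pos.mpr (sub_ne_zero.2 h2)
      nlinarith [sq_nonneg (b.1-a.1)]
    · have hp : 0 < (b.1-a.1)*(b.1-a.1) := mul_self_pos.mpr (sub_ne_zero.2 h1)
      nlinarith [sq_nonneg (b.2-a.2)]
  obtain ⟨ε, hε, hball⟩ := Metric.isOpen_iff.1 isOpen_interior x hint
  set δ := ε / (2 * (‖v‖ + 1)) with hδ
  have hnv : 0 < ‖v‖ + 1 := by positivity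
  have hδpos : 0 < δ := by positivity
  have hmem : x - δ • v ∈ Metric.ball x ε := by
    rw [Metric.mem_ball, dist_eq_norm]
    have : x - δ • v - x = -(δ • v) := by abel
    rw [this, norm_neg, norm_smul, Real.norm_eq_abs, abs_of_pos hδpos]
    rw [hδ, div_mul_eq_mul_div, div_lt_iff₀ (by positivity : (0:ℝ) < 2*(‖v‖+1))]
    nlinarith [norm_nonneg v, mul_pos hε (by positivity : (0:ℝ) < ‖v‖+2)]
  have hin : x - δ • v ∈ convexHull ℝ (P : Set Pt) := interior_subset (hball hmem)
  have := hhalf hin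
  simp only [Set.mem_setOf_eq] at this
  rw [hLv δ, hLx] at this
  nlinarith [mul_pos hδpos hvpos]

lemma exists_order (m : ℕ) (P : Finset Pt) (hcard : P.card = 2*m+1)
    (hconv : ConvexPosition P) (hgp : NoThreeCollinear P) :
    ∃ σ : Fin (2*m+1) → Pt, Function.Injective σ ∧ (∀ i, σ i ∈ P) ∧
      (∀ p ∈ P, ∃ i, σ i = p) ∧
      (∀ i j k : Fin (2*m+1), i.val < j.val → j.val < k.val →
        0 < orient (σ i) (σ j) (σ k)) := by
  classical
  have hPne : P.Nonempty := by
    rw [← Finset.card_pos, hcard]; omega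
  -- lexicographic minimum
  set x0 := (P.image Prod.fst).min' (hPne.image _) with hx0
  have hx0mem : ∃ q ∈ P, q.1 = x0 := by
    have := Finset.min'_mem (P.image Prod.fst) (hPne.image _)
    rw [← hx0] at this
    simpa [Finset.mem_image] using this
  set Q := P.filter (fun q => q.1 = x0) with hQ
  have hQne : Q.Nonempty := by
    obtain ⟨q, hq, hq1⟩ := hx0mem
    exact ⟨q, by simp [hQ, hq, hq1]⟩
  set y0 := (Q.image Prod.snd).min' (hQne.image _) with hy0
  set pstar : Pt := (x0, y0) with hpstar
  have hpP : pstar ∈ P := by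
    have := Finset.min'_mem (Q.image Prod.snd) (hQne.image _)
    rw [← hy0] at this
    obtain ⟨q, hq, hq2⟩ := Finset.mem_image.1 this
    have hq1 : q.1 = x0 := (Finset.mem_filter.1 hq).2
    have : q = pstar := Prod.ext hq1 hq2
    rw [← this]; exact (Finset.mem_filter.1 hq).1
  have hxle : ∀ q ∈ P, x0 ≤ q.1 := by
    intro q hq
    exact hx0 ▸ Finset.min'_le _ _ (Finset.mem_image_of_mem _ hq)
  have hyle : ∀ q ∈ P, q.1 = x0 → y0 ≤ q.2 := by
    intro q hq hq1
    exact hy0 ▸ Finset.min'_le _ _ (Finset.mem_image_of_mem _ (by simp [hQ, hq, hq1]))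
  set S := P.erase pstar with hS
  have hdH : ∀ q ∈ S, (x0 < q.1) ∨ (q.1 = x0 ∧ y0 < q.2) := by
    intro q hq
    have hqP : q ∈ P := Finset.mem_of_mem_erase hq
    have hqne : q ≠ pstar := Finset.ne_of_mem_erase hq
    rcases lt_or_eq_of_le (hxle q hqP) with h | h
    · exact Or.inl h
    · right
      refine ⟨h.symm, ?_⟩
      rcases lt_or_eq_of_le (hyle q hqP h.symm) with h2 | h2
      · exact h2
      · exact absurd (Prod.ext h.symm h2.symm) hqne
  -- the slope key
  set κ : Pt → EReal := fun q => if q.1 = x0 then (⊤:EReal) else (((q.2 - y0)/(q.1 - x0) : ℝ) : EReal) with hκ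
  have horient : ∀ q ∈ S, ∀ r ∈ S, q ≠ r → orient pstar q r ≠ 0 := by
    intro q hq r hr hqr
    intro h0
    have hqP := Finset.mem_of_mem_erase hq
    have hrP := Finset.mem_of_mem_erase hr
    exact hgp pstar hpP q hqP r hrP (Ne.symm (Finset.ne_of_mem_erase hq))
      (Ne.symm (Finset.ne_of_mem_erase hr)) hqr (collinear_of_orient_eq_zero h0)
  have hlt : ∀ q ∈ S, ∀ r ∈ S, (κ q < κ r ↔ 0 < orient pstar q r) := by
    intro q hq r hr
    have hq' := hdH q hq
    have hr' := hdH r hr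
    rcases eq_or_ne q.1 x0 with hq1 | hq1 <;> rcases eq_or_ne r.1 x0 with hr1 | hr1
    · -- both vertical
      have hkq : κ q = ⊤ := by simp [hκ, hq1]
      have hkr : κ r = ⊤ := by simp [hκ, hr1]
      rw [hkq, hkr]
      constructor
      · intro h; exact absurd h (lt_irrefl _)
      · intro h
        exfalso
        unfold orient at h
        simp only [hpstar] at h
        rw [hq1, hr1] at h
        simp at h
    · -- q vertical, r not : both sides false
      have hrpos : x0 < r.1 := by rcases hr' with h | h; exact h; exact absurd h.1 hr1
      have hqpos : y0 < q.2 := by rcases hq' with h | h; rw [hq1] at h; exact absurd h (lt_irrefl _); exact h.2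
      have hkq : κ q = ⊤ := by simp [hκ, hq1]
      have hkr : κ r = (((r.2 - y0)/(r.1 - x0) : ℝ) : EReal) := by simp [hκ, hr1]
      rw [hkq, hkr]
      constructor
      · intro h; exact absurd h (by simp)
      · intro h
        exfalso
        unfold orient at h
        simp only [hpstar] at h
        rw [hq1] at h
        nlinarith
    · -- r vertical, q not
      have hqpos : x0 < q.1 := by rcases hq' with h | h; exact h; exact absurd h.1 hq1
      have hrpos : y0 < r.2 := by rcases hr' with h | h; rw [hr1] at h; exact absurd h (lt_irrefl _); exact h.2
      have hkq : κ q = (((q.2 - y0)/(q.1 - x0) : ℝ) : EReal) := by simp [hκ, hq1]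
      have hkr : κ r = ⊤ := by simp [hκ, hr1]
      rw [hkq, hkr]
      constructor
      · intro _
        unfold orient
        simp only [hpstar]
        rw [hr1]
        nlinarith
      · intro _
        exact EReal.coe_lt_top _
    · -- both slopes
      have hqpos : x0 < q.1 := by rcases hq' with h | h; exact h; exact absurd h.1 hq1
      have hrpos : x0 < r.1 := by rcases hr' with h | h; exact h; exact absurd h.1 hr1
      have hkq : κ q = (((q.2 - y0)/(q.1 - x0) : ℝ) : EReal) := by simp [hκ, hq1]
      have hkr : κ r = (((r.2 - y0)/(r.1 - x0) : ℝ) : EReal) := by simp [hκ, hr1]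
      rw [hkq, hkr, EReal.coe_lt_coe_iff]
      rw [div_lt_div_iff₀ (by linarith) (by linarith)]
      unfold orient
      simp only [hpstar]
      constructor
      · intro h; nlinarith
      · intro h; nlinarith
  have hκinj : Set.InjOn κ S := by
    intro q hq r hr hqr
    by_contra hne
    have h1 : ¬ (κ q < κ r) := by
      intro h
      have := (hlt q hq r hr).1 h
      -- fine, but we need both directions to conclude orient = 0; derive contradiction later
      have h2 : ¬ (κ q < κ r) := by rw [hqr]; exact lt_irrefl _
      exact h2 h
    have h2 : ¬ (κ r < κ q) := by rw [hqr]; exact lt_irrefl _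
    rw [hlt q hq r hr] at h1
    rw [hlt r hr q hq] at h2
    push_neg at h1 h2
    have : orient pstar q r = 0 := by
      have hflip : orient pstar r q = - orient pstar q r := by unfold orient; ring
      rw [hflip] at h2
      linarith
    exact horient q hq r hr hne this
  have hScard : S.card = 2*m := by
    rw [hS, Finset.card_erase_of_mem hpP, hcard]
    omega
  have hEcard : (S.image κ).card = 2*m := by
    rw [Finset.card_image_of_injOn hκinj, hScard]
  set φ := (S.image κ).orderIsoOfFin hEcard with hφ
  have hιex : ∀ i : Fin (2*m), ∃ q, q ∈ S ∧ κ q = (φ i : EReal) := by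
    intro i
    have := (φ i).2
    obtain ⟨q, hq, hκq⟩ := Finset.mem_image.1 this
    exact ⟨q, hq, hκq⟩
  set ι : Fin (2*m) → Pt := fun i => (hιex i).choose with hι
  have hιS : ∀ i, ι i ∈ S := fun i => (hιex i).choose_spec.1
  have hικ : ∀ i, κ (ι i) = (φ i : EReal) := fun i => (hιex i).choose_spec.2
  have hιinj : Function.Injective ι := by
    intro i j hij
    have : (φ i : EReal) = (φ j : EReal) := by rw [← hικ, ← hικ, hij]
    have : φ i = φ j := Subtype.ext this
    exact φ.injective this
  have hιmono : ∀ i j : Fin (2*m), i < j → 0 < orient pstar (ι i) (ι j) := by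
    intro i j hij
    have h1 : κ (ι i) < κ (ι j) := by
      rw [hικ, hικ]
      exact_mod_cast φ.strictMono hij
    exact (hlt _ (hιS i) _ (hιS j)).1 h1
  -- assemble σ
  refine ⟨fun i => if h : (i : ℕ) = 0 then pstar else ι ⟨i.val - 1, by omega⟩, ?_, ?_, ?_, ?_⟩
  · intro i j hij
    by_cases hi : (i:ℕ) = 0 <;> by_cases hj : (j:ℕ) = 0
    · exact Fin.ext (by omega)
    · simp only [dif_pos hi, dif_neg hj] at hij
      exact absurd (hij ▸ hιS ⟨j.val-1, by omega⟩) (by rw [hS]; exact Finset.notMem_erase _ _)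
    · simp only [dif_neg hi, dif_pos hj] at hij
      exact absurd (hij ▸ hιS ⟨i.val-1, by omega⟩ : pstar ∈ S) (by rw [hS]; exact Finset.notMem_erase _ _)
    · simp only [dif_neg hi, dif_neg hj] at hij
      have := hιinj hij
      have := Fin.mk.injEq _ _ _ _ ▸ this
      exact Fin.ext (by omega)
  · intro i
    by_cases hi : (i:ℕ) = 0
    · simp only [dif_pos hi]; exact hpP
    · simp only [dif_neg hi]; exact Finset.mem_of_mem_erase (hιS _)
  · -- surjectivity via cardinality
    intro p hp
    by_contra hnp
    push_neg at hnp
    have himg : (Finset.univ.image (fun i : Fin (2*m+1) =>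
        if h : (i : ℕ) = 0 then pstar else ι ⟨i.val - 1, by omega⟩)) ⊆ P.erase p := by
      intro q hq
      obtain ⟨i, _, rfl⟩ := Finset.mem_image.1 hq
      refine Finset.mem_erase.2 ⟨?_, ?_⟩
      · intro he; exact hnp i he
      · by_cases hi : (i:ℕ) = 0
        · simp only [dif_pos hi]; exact hpP
        · simp only [dif_neg hi]; exact Finset.mem_of_mem_erase (hιS _)
    have hinj2 : Function.Injective (fun i : Fin (2*m+1) =>
        if h : (i : ℕ) = 0 then pstar else ι ⟨i.val - 1, by omega⟩) := by
      intro i j hij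
      by_cases hi : (i:ℕ) = 0 <;> by_cases hj : (j:ℕ) = 0
      · exact Fin.ext (by omega)
      · simp only [dif_pos hi, dif_neg hj] at hij
        exact absurd (hij ▸ hιS ⟨j.val-1, by omega⟩) (by rw [hS]; exact Finset.notMem_erase _ _)
      · simp only [dif_neg hi, dif_pos hj] at hij
        exact absurd (hij ▸ hιS ⟨i.val-1, by omega⟩ : pstar ∈ S) (by rw [hS]; exact Finset.notMem_erase _ _)
      · simp only [dif_neg hi, dif_neg hj] at hij
        have := hιinj hij
        have := Fin.mk.injEq _ _ _ _ ▸ this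
        exact Fin.ext (by omega)
    have hcard2 : (Finset.univ.image (fun i : Fin (2*m+1) =>
        if h : (i : ℕ) = 0 then pstar else ι ⟨i.val - 1, by omega⟩)).card = 2*m+1 := by
      rw [Finset.card_image_of_injective _ hinj2, Finset.card_univ, Fintype.card_fin]
    have := Finset.card_le_card himg
    rw [hcard2, Finset.card_erase_of_mem hp, hcard] at this
    omega
  · -- increasing triples ccw
    intro i j k hij hjk
    by_cases hi : (i:ℕ) = 0
    · simp only [dif_pos hi, dif_neg (by omega : ¬ (j:ℕ) = 0), dif_neg (by omega : ¬ (k:ℕ) = 0)]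
      exact hιmono _ _ (by simp only [Fin.mk_lt_mk]; omega)
    · simp only [dif_neg hi, dif_neg (by omega : ¬ (j:ℕ) = 0), dif_neg (by omega : ¬ (k:ℕ) = 0)]
      set A := ι ⟨i.val-1, by omega⟩ with hA
      set B := ι ⟨j.val-1, by omega⟩ with hB
      set C := ι ⟨k.val-1, by omega⟩ with hC
      have h1 : 0 < orient pstar A B := hιmono _ _ (by simp only [Fin.mk_lt_mk]; omega)
      have h2 : 0 < orient pstar B C := hιmono _ _ (by simp only [Fin.mk_lt_mk]; omega)
      have h3 : 0 < orient pstar A C := hιmono _ _ (by simp only [Fin.mk_lt_mk]; omega)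
      have hABne : A ≠ B := fun h => by
        have := hιinj h
        simp only [Fin.mk.injEq] at this
        omega
      have hBCne : B ≠ C := fun h => by
        have := hιinj h
        simp only [Fin.mk.injEq] at this
        omega
      have hACne : A ≠ C := fun h => by
        have := hιinj h
        simp only [Fin.mk.injEq] at this
        omega
      rcases lt_trichotomy (orient A B C) 0 with hneg | hzero | hpos
      · exfalso
        -- B strictly inside triangle pstar A C : contradiction with convex position
        have hmem : B ∈ convexHull ℝ ({pstar, A, C} : Set Pt) := by
          apply mem_triangle
          · -- 0 < orient B A C
            have : orient B A C = - orient A B C := by unfold orient; ring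
            rw [this]; linarith
          · exact h2
          · exact h1
        have hsub : ({pstar, A, C} : Set Pt) ⊆ ((P.erase B : Finset Pt) : Set Pt) := by
          intro y hy
          rcases hy with rfl | rfl | rfl
          · simp only [Finset.coe_erase, Set.mem_diff, Set.mem_singleton_iff]
            exact ⟨hpP, fun h => by
              exact absurd (h ▸ hιS ⟨j.val-1, by omega⟩ : pstar ∈ S) (by rw [hS]; exact Finset.notMem_erase _ _)⟩
          · simp only [Finset.coe_erase, Set.mem_diff, Set.mem_singleton_iff]
            exact ⟨Finset.mem_of_mem_erase (hιS _), fun h => hABne h⟩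
          · simp only [Finset.coe_erase, Set.mem_diff, Set.mem_singleton_iff]
            exact ⟨Finset.mem_of_mem_erase (hιS _), fun h => hBCne h.symm⟩
        exact hconv B (Finset.mem_of_mem_erase (hιS _)) (convexHull_mono hsub hmem)
      · exfalso
        have hBP := Finset.mem_of_mem_erase (hιS ⟨j.val-1, by omega⟩)
        exact hgp A (Finset.mem_of_mem_erase (hιS _)) B hBP C
          (Finset.mem_of_mem_erase (hιS _)) hABne hACne hBCne
          (collinear_of_orient_eq_zero hzero)
      · exact hpos

def fpt (m : ℕ) (k : ℕ) : Fin (2*m+1) := ⟨k % (2*m+1), Nat.mod_lt _ (by omega)⟩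
lemma fpt_val (m k : ℕ) (h : k < 2*m+1) : (fpt m k).val = k := Nat.mod_eq_of_lt h
def pairE (m j : ℕ) : Sym2 (Fin (2*m+1)) := s(fpt m (2*j+1), fpt m (2*j+2))
def NconvC (m : ℕ) : Finset (Sym2 (Fin (2*m+1))) := (range m).image (fun j => pairE m j)

lemma mem_pairE {m j : ℕ} (hj : j < m) (v : Fin (2*m+1)) :
    v ∈ pairE m j ↔ (v.val = 2*j+1 ∨ v.val = 2*j+2) := by
  rw [pairE, Sym2.mem_iff]
  constructor
  · rintro (rfl | rfl)
    · left; exact fpt_val m _ (by omega)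
    · right; exact fpt_val m _ (by omega)
  · rintro (h | h)
    · left; exact Fin.ext (by rw [h, fpt_val m _ (by omega)])
    · right; exact Fin.ext (by rw [h, fpt_val m _ (by omega)])

lemma pairE_inj {m : ℕ} {j j' : ℕ} (hj : j < m) (hj' : j' < m) (h : pairE m j = pairE m j') :
    j = j' := by
  have : fpt m (2*j+1) ∈ pairE m j' := h ▸ Sym2.mem_mk_left _ _
  rw [mem_pairE hj'] at this
  rw [fpt_val m _ (by omega)] at this
  omega

section Main
variable {m : ℕ} (σ : Fin (2*m+1) → Pt) (P : Finset Pt)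

noncomputable def Mof (N : Finset (Sym2 (Fin (2*m+1)))) : Finset (Sym2 Pt) := N.image (Sym2.map σ)

structure CInv (u : Fin (2*m+1)) (N : Finset (Sym2 (Fin (2*m+1)))) : Prop where
  card : N.card = m
  ndiag : ∀ e ∈ N, ¬ e.IsDiag
  disj : ∀ e ∈ N, ∀ f ∈ N, e ≠ f → ∀ v ∈ e, v ∉ f
  cover : ∀ v : Fin (2*m+1), v ≠ u → ∃ e ∈ N, v ∈ e
  unm : ∀ e ∈ N, u ∉ e
  plane : ∀ e ∈ N, ∀ f ∈ N, e ≠ f →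
    eseg (Sym2.map σ e) ∩ eseg (Sym2.map σ f) = ∅

variable (hσi : Function.Injective σ) (hσP : ∀ i, σ i ∈ P)
  (hσS : ∀ p ∈ P, ∃ i, σ i = p)
  (hGood : ∀ i j k : Fin (2*m+1), i.val < j.val → j.val < k.val →
    0 < orient (σ i) (σ j) (σ k))

include hσi in
lemma map_inj : Function.Injective (Sym2.map σ) := fun e f h => by
  induction e using Sym2.inductionOn with
  | hf x y =>
  induction f using Sym2.inductionOn with
  | hf z w =>
  rw [Sym2.map_pair_eq, Sym2.map_pair_eq, Sym2.eq_iff] at h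
  rw [Sym2.eq_iff]
  rcases h with ⟨h1, h2⟩ | ⟨h1, h2⟩
  · exact Or.inl ⟨hσi h1, hσi h2⟩
  · exact Or.inr ⟨hσi h1, hσi h2⟩

-- side sign facts
include hGood in
lemma side_out {a b v : Fin (2*m+1)} (hab : a.val < b.val)
    (hout : v.val < a.val ∨ b.val < v.val) : 0 < orient (σ a) (σ b) (σ v) := by
  rcases hout with h | h
  · have := hGood v a b h hab
    have hcyc : orient (σ v) (σ a) (σ b) = orient (σ a) (σ b) (σ v) := by
      unfold orient; ring
    linarith [hcyc ▸ this]
  · exact hGood a b v hab h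

include hGood in
lemma side_in {a b v : Fin (2*m+1)} (hab : a.val < b.val)
    (hin : a.val < v.val ∧ v.val < b.val) : orient (σ a) (σ b) (σ v) < 0 := by
  have := hGood a v b hin.1 hin.2
  have hsw : orient (σ a) (σ v) (σ b) = - orient (σ a) (σ b) (σ v) := by
    unfold orient; ring
  linarith [hsw ▸ this]

include hGood in
lemma step_plane (a b : Fin (2*m+1)) (hab : a.val < b.val) (e : Sym2 (Fin (2*m+1)))
    (harc : (∀ v ∈ e, a.val < v.val ∧ v.val < b.val) ∨ (∀ v ∈ e, v.val < a.val ∨ b.val < v.val)) :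
    eseg (Sym2.map σ s(a,b)) ∩ eseg (Sym2.map σ e) = ∅ := by
  induction e using Sym2.inductionOn with
  | hf x y =>
  rw [Sym2.map_pair_eq, Sym2.map_pair_eq]
  show openSegment ℝ (σ a) (σ b) ∩ openSegment ℝ (σ x) (σ y) = ∅
  apply disjoint_of_side
  rcases harc with h | h
  · right
    exact ⟨side_in σ hGood hab (h x (Sym2.mem_mk_left _ _)),
           side_in σ hGood hab (h y (Sym2.mem_mk_right _ _))⟩
  · left
    exact ⟨side_out σ hGood hab (h x (Sym2.mem_mk_left _ _)),
           side_out σ hGood hab (h y (Sym2.mem_mk_right _ _))⟩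

include hσi hσP in
lemma papm_of_cinv {u : Fin (2*m+1)} {N : Finset (Sym2 (Fin (2*m+1)))} (h : CInv σ u N) :
    IsPAPM P m (Mof σ N) := by
  constructor
  · rw [Mof, Finset.card_image_of_injective _ (map_inj σ hσi), h.card]
  · intro e he p hp
    obtain ⟨e', he', rfl⟩ := Finset.mem_image.1 he
    obtain ⟨v, hv, rfl⟩ := Sym2.mem_map.1 hp
    exact hσP v
  · intro e he hd
    obtain ⟨e', he', rfl⟩ := Finset.mem_image.1 he
    apply h.ndiag e' he'
    induction e' using Sym2.inductionOn with
    | hf x y =>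
    rw [Sym2.map_pair_eq] at hd
    rw [Sym2.isDiag_iff_proj_eq] at *
    exact hσi hd
  · intro e he f hf hef p hpe hpf
    obtain ⟨e', he', rfl⟩ := Finset.mem_image.1 he
    obtain ⟨f', hf', rfl⟩ := Finset.mem_image.1 hf
    have hef' : e' ≠ f' := fun hh => hef (by rw [hh])
    obtain ⟨v, hv, rfl⟩ := Sym2.mem_map.1 hpe
    obtain ⟨w, hw, hvw⟩ := Sym2.mem_map.1 hpf
    have : w = v := hσi hvw
    subst this
    exact h.disj e' he' f' hf' hef' w hv hw
  · intro e he f hf hef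
    obtain ⟨e', he', rfl⟩ := Finset.mem_image.1 he
    obtain ⟨f', hf', rfl⟩ := Finset.mem_image.1 hf
    exact h.plane e' he' f' hf' (fun hh => hef (by rw [hh]))

include hGood in
lemma cinv_conv : CInv σ (fpt m 0) (NconvC m) := by
  have hNc : ∀ e ∈ NconvC m, ∃ j, j < m ∧ e = pairE m j := by
    intro e he
    obtain ⟨j, hj, rfl⟩ := Finset.mem_image.1 he
    exact ⟨j, Finset.mem_range.1 hj, rfl⟩
  constructor
  · rw [NconvC, Finset.card_image_of_injOn, Finset.card_range]
    intro j hj j' hj' h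
    exact pairE_inj (Finset.mem_range.1 hj) (Finset.mem_range.1 hj') h
  · intro e he
    obtain ⟨j, hj, rfl⟩ := hNc e he
    rw [pairE, Sym2.isDiag_iff_proj_eq]
    intro hd
    have := congrArg Fin.val hd
    rw [fpt_val m _ (by omega), fpt_val m _ (by omega)] at this
    omega
  · intro e he f hf hef v hve hvf
    obtain ⟨j, hj, rfl⟩ := hNc e he
    obtain ⟨j', hj', rfl⟩ := hNc f hf
    rw [mem_pairE hj] at hve
    rw [mem_pairE hj'] at hvf
    have hjj : j = j' := by omega
    subst hjj
    exact hef rfl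
  · intro v hv
    have hv0 : v.val ≠ 0 := by
      intro h0
      exact hv (Fin.ext (by rw [h0, fpt_val m 0 (by omega)]))
    have hvlt : v.val < 2*m+1 := v.isLt
    set j := (v.val - 1)/2 with hj
    have hjm : j < m := by omega
    refine ⟨pairE m j, Finset.mem_image.2 ⟨j, Finset.mem_range.2 hjm, rfl⟩, ?_⟩
    rw [mem_pairE hjm]
    omega
  · intro e he hmem
    obtain ⟨j, hj, rfl⟩ := hNc e he
    rw [mem_pairE hj] at hmem
    rw [fpt_val m 0 (by omega)] at hmem
    omega
  · intro e he f hf hef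
    obtain ⟨j, hj, rfl⟩ := hNc e he
    obtain ⟨j', hj', rfl⟩ := hNc f hf
    have hjj : j ≠ j' := fun h => hef (by rw [h])
    have : pairE m j = s(fpt m (2*j+1), fpt m (2*j+2)) := rfl
    rw [this]
    apply step_plane σ hGood
    · rw [fpt_val m _ (by omega), fpt_val m _ (by omega)]; omega
    · right
      intro v hv
      rw [mem_pairE hj'] at hv
      rw [fpt_val m _ (by omega), fpt_val m _ (by omega)]
      omega

include hσi hσP hGood in
lemma step_general {u : Fin (2*m+1)} {N : Finset (Sym2 (Fin (2*m+1)))} (hI : CInv σ u N)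
    (q : Fin (2*m+1)) (hq : q ≠ u) (f : Sym2 (Fin (2*m+1))) (hf : f ∈ N) (hqf : q ∈ f)
    (lo hi : Fin (2*m+1)) (hlh : lo.val < hi.val)
    (hor : (lo = u ∧ hi = q) ∨ (lo = q ∧ hi = u))
    (harc : ∀ e ∈ N, e ≠ f →
      (∀ v ∈ e, lo.val < v.val ∧ v.val < hi.val) ∨ (∀ v ∈ e, v.val < lo.val ∨ hi.val < v.val)) :
    CInv σ (Sym2.Mem.other' hqf) (insert s(u,q) (N.erase f)) ∧
    Sym2.Mem.other' hqf ≠ u ∧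
    (∀ (h1 : IsPAPM P m (Mof σ N)) (h2 : IsPAPM P m (Mof σ (insert s(u,q) (N.erase f)))),
      (GM P m).Adj ⟨Mof σ N, h1⟩ ⟨Mof σ (insert s(u,q) (N.erase f)), h2⟩) := by
  classical
  set p := Sym2.Mem.other' hqf with hp
  have hfspec : s(q, p) = f := Sym2.other_spec' hqf
  have hpf : p ∈ f := Sym2.other_mem' hqf
  have hpq : p ≠ q := fun h => hI.ndiag f hf (by
    rw [← hfspec, h]; exact Sym2.mk_isDiag_iff.2 rfl)
  have hpu : p ≠ u := fun h => hI.unm f hf (h ▸ hpf)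
  set g : Sym2 (Fin (2*m+1)) := s(u,q) with hg
  have hug : u ∈ g := Sym2.mem_mk_left u q
  have hqg : q ∈ g := Sym2.mem_mk_right u q
  have hgN : g ∉ N := fun h => hI.unm g h hug
  have hgf : g ≠ f := fun h => hI.unm f hf (h ▸ hug)
  -- facts about old edges other than f
  have hold : ∀ e ∈ N, e ≠ f → ∀ v ∈ e, v ≠ u ∧ v ≠ q ∧ v ≠ p := by
    intro e he hef v hv
    refine ⟨fun h => hI.unm e he (h ▸ hv), fun h => ?_, fun h => ?_⟩
    · exact hI.disj e he f hf hef q (h ▸ hv) hqf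
    · exact hI.disj e he f hf hef p (h ▸ hv) hpf
  have hmemN' : ∀ e, e ∈ insert g (N.erase f) ↔ (e = g ∨ (e ∈ N ∧ e ≠ f)) := by
    intro e
    rw [Finset.mem_insert, Finset.mem_erase]
    tauto
  have hglohi : g = s(lo, hi) := by
    rcases hor with ⟨rfl, rfl⟩ | ⟨rfl, rfl⟩
    · rfl
    · exact Sym2.eq_swap
  have hmlt : 0 < m := by
    have : N.Nonempty := ⟨f, hf⟩
    have := Finset.card_pos.2 this
    omega
  refine ⟨⟨?_, ?_, ?_, ?_, ?_, ?_⟩, hpu, ?_⟩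
  · -- card
    rw [Finset.card_insert_of_notMem (fun h => hgN (Finset.mem_of_mem_erase h)),
      Finset.card_erase_of_mem hf, hI.card]
    omega
  · -- ndiag
    intro e he
    rcases (hmemN' e).1 he with rfl | ⟨heN, _⟩
    · rw [hg, Sym2.mk_isDiag_iff]
      exact fun h => hq (h.symm)
    · exact hI.ndiag e heN
  · -- disj
    intro e he e' he' hee v hve hve'
    rcases (hmemN' e).1 he with rfl | ⟨heN, hef⟩ <;>
      rcases (hmemN' e').1 he' with rfl | ⟨heN', hef'⟩
    · exact hee rfl
    · rcases Sym2.mem_iff.1 hve with rfl | rfl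
      · exact hI.unm e' heN' hve'
      · exact (hold e' heN' hef' v hve').2.1 rfl
    · rcases Sym2.mem_iff.1 hve' with rfl | rfl
      · exact hI.unm e heN hve
      · exact (hold e heN hef v hve).2.1 rfl
    · exact hI.disj e heN e' heN' hee v hve hve'
  · -- cover
    intro v hv
    rcases eq_or_ne v u with rfl | hvu
    · exact ⟨g, Finset.mem_insert_self _ _, hug⟩
    rcases eq_or_ne v q with rfl | hvq
    · exact ⟨g, Finset.mem_insert_self _ _, hqg⟩
    obtain ⟨e, he, hve⟩ := hI.cover v hvu
    have hef : e ≠ f := by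
      intro h
      subst h
      rw [← hfspec, Sym2.mem_iff] at hve
      rcases hve with rfl | rfl
      · exact hvq rfl
      · exact hv rfl
    exact ⟨e, (hmemN' e).2 (Or.inr ⟨he, hef⟩), hve⟩
  · -- unm
    intro e he hpe
    rcases (hmemN' e).1 he with rfl | ⟨heN, hef⟩
    · rcases Sym2.mem_iff.1 hpe with h | h
      · exact hpu h
      · exact hpq h
    · exact (hold e heN hef p hpe).2.2 rfl
  · -- plane
    intro e he e' he' hee
    rcases (hmemN' e).1 he with rfl | ⟨heN, hef⟩ <;>
      rcases (hmemN' e').1 he' with rfl | ⟨heN', hef'⟩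
    · exact absurd rfl hee
    · rw [hglohi]
      exact step_plane σ hGood lo hi hlh e' (harc e' heN' hef')
    · rw [Set.inter_comm, hglohi]
      exact step_plane σ hGood lo hi hlh e (harc e heN hef)
    · exact hI.plane e heN e' heN' hee
  · -- adjacency
    intro h1 h2
    show _ ∧ _
    constructor
    · intro hMeq
      have hMeq' : Mof σ N = Mof σ (insert g (N.erase f)) := congrArg Subtype.val hMeq
      have hfN' : f ∈ insert g (N.erase f) := by
        have : Sym2.map σ f ∈ Mof σ (insert g (N.erase f)) := by
          rw [← hMeq']
          exact Finset.mem_image_of_mem _ hf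
        obtain ⟨e0, he0, heq⟩ := Finset.mem_image.1 this
        rwa [map_inj σ hσi heq] at he0
      rcases (hmemN' f).1 hfN' with h | ⟨_, h⟩
      · exact hgf h.symm
      · exact h rfl
    · show (Mof σ N ∩ Mof σ (insert g (N.erase f))).card = m - 1
      have hint : Mof σ N ∩ Mof σ (insert g (N.erase f)) = Mof σ (N ∩ insert g (N.erase f)) := by
        rw [Mof, Mof, Mof, ← Finset.image_inter _ _ (map_inj σ hσi)]
      rw [hint]
      have hNN : N ∩ insert g (N.erase f) = N.erase f := by
        ext e
        rw [Finset.mem_inter, hmemN' e, Finset.mem_erase]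
        constructor
        · rintro ⟨heN, rfl | ⟨_, hef⟩⟩
          · exact absurd heN hgN
          · exact ⟨hef, heN⟩
        · rintro ⟨hef, heN⟩
          exact ⟨heN, Or.inr ⟨heN, hef⟩⟩
      rw [hNN, Mof, Finset.card_image_of_injective _ (map_inj σ hσi),
        Finset.card_erase_of_mem hf, hI.card]

def Kc (N : Finset (Sym2 (Fin (2*m+1)))) : ℕ :=
  ((range m).filter (fun j => pairE m j ∉ N)).card

lemma Nconv_card : (NconvC m).card = m := by
  rw [NconvC, Finset.card_image_of_injOn, Finset.card_range]
  intro j hj j' hj' h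
  exact pairE_inj (Finset.mem_range.1 hj) (Finset.mem_range.1 hj') h

lemma eq_conv_of_K0 {N : Finset (Sym2 (Fin (2*m+1)))} (hcard : N.card = m) (hK : Kc N = 0) :
    N = NconvC m := by
  have hsub : NconvC m ⊆ N := by
    intro e he
    obtain ⟨j, hj, rfl⟩ := Finset.mem_image.1 he
    by_contra hnot
    have : j ∈ (range m).filter (fun j => pairE m j ∉ N) := Finset.mem_filter.2 ⟨hj, hnot⟩
    have := Finset.card_pos.2 ⟨j, this⟩
    rw [Kc] at hK
    omega
  exact (Finset.eq_of_subset_of_card_le hsub (by rw [hcard, Nconv_card])).symm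

include hσi hσP hGood in
lemma reach : ∀ (fuel : ℕ) (u : Fin (2*m+1)) (N : Finset (Sym2 (Fin (2*m+1)))),
    CInv σ u N →
    2 * Kc N + (if u = fpt m 0 then 1 else 0) ≤ fuel →
    ∀ (h1 : IsPAPM P m (Mof σ N)) (h2 : IsPAPM P m (Mof σ (NconvC m))),
    ∃ w : (GM P m).Walk ⟨Mof σ N, h1⟩ ⟨Mof σ (NconvC m), h2⟩, w.length ≤ fuel := by
  intro fuel
  induction fuel with
  | zero =>
    intro u N hI hb h1 h2
    have hK : Kc N = 0 := by omega
    have hNN : N = NconvC m := eq_conv_of_K0 hI.card hK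
    subst hNN
    exact ⟨SimpleGraph.Walk.nil, by simp⟩
  | succ fuel ih =>
    intro u N hI hb h1 h2
    by_cases hK : Kc N = 0
    · have hNN : N = NconvC m := eq_conv_of_K0 hI.card hK
      subst hNN
      exact ⟨SimpleGraph.Walk.nil, by simp⟩
    by_cases hu : u = fpt m 0
    · -- move B : attach the unmatched point 0 to the lowest active point
      subst hu
      set T := (range m).filter (fun j => pairE m j ∉ N) with hT
      have hTne : T.Nonempty := by
        rw [← Finset.card_pos]
        have hKT : Kc N = T.card := rfl
        omega
      set j0 := T.min' hTne with hj0
      have hj0T : j0 ∈ T := Finset.min'_mem _ _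
      have hj0m : j0 < m := Finset.mem_range.1 (Finset.mem_filter.1 hj0T).1
      have hj0N : pairE m j0 ∉ N := (Finset.mem_filter.1 hj0T).2
      have hj0min : ∀ j' ∈ T, j0 ≤ j' := fun j' h => Finset.min'_le _ _ h
      set b := fpt m (2*j0+1) with hbdef
      have hbval : b.val = 2*j0+1 := fpt_val m _ (by omega)
      have huval : (fpt m 0).val = 0 := fpt_val m 0 (by omega)
      have hbu : b ≠ fpt m 0 := by
        intro h
        have := congrArg Fin.val h
        rw [hbval, huval] at this
        omega
      obtain ⟨f, hf, hbf⟩ := hI.cover b hbu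
      have harc : ∀ e ∈ N, e ≠ f →
          (∀ v ∈ e, (fpt m 0).val < v.val ∧ v.val < b.val) ∨
          (∀ v ∈ e, v.val < (fpt m 0).val ∨ b.val < v.val) := by
        intro e he hef
        by_cases hin : ∃ v ∈ e, v.val < 2*j0+1
        · left
          obtain ⟨x, hxe, hx⟩ := hin
          have hxu : x ≠ fpt m 0 := fun h => hI.unm e he (h ▸ hxe)
          have hx0 : x.val ≠ 0 := fun h => hxu (Fin.ext (by rw [h, huval]))
          set jx := (x.val - 1)/2 with hjx
          have hjxlt : jx < j0 := by omega
          have hjxT : jx ∉ T := fun h => absurd (hj0min jx h) (by omega)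
          have hjxN : pairE m jx ∈ N := by
            by_contra hnot
            exact hjxT (Finset.mem_filter.2 ⟨Finset.mem_range.2 (by omega), hnot⟩)
          have hxpair : x ∈ pairE m jx := (mem_pairE (by omega) x).2 (by omega)
          have hepair : e = pairE m jx := by
            by_contra hne
            exact hI.disj e he _ hjxN hne x hxe hxpair
          intro v hv
          rw [hepair, mem_pairE (by omega) v] at hv
          rw [huval, hbval]
          omega
        · right
          push_neg at hin
          intro v hv
          have hvb : v ≠ b := fun h => (hI.disj e he f hf hef v hv) (h ▸ hbf)
          right
          have h1v := hin v hv
          have hvbv : v.val ≠ 2*j0+1 := fun h => hvb (Fin.ext (by rw [h, hbval]))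
          rw [hbval]
          omega
      obtain ⟨hI', hpu, hadj⟩ := step_general σ P hσi hσP hGood hI b hbu f hf hbf
        (fpt m 0) b (by rw [huval, hbval]; omega) (Or.inl ⟨rfl, rfl⟩) harc
      set N' := insert s(fpt m 0, b) (N.erase f) with hN'
      have h1' : IsPAPM P m (Mof σ N') := papm_of_cinv σ P hσi hσP hI'
      have hmemiff : ∀ j' ∈ range m, (pairE m j' ∉ N' ↔ pairE m j' ∉ N) := by
        intro j' hj'
        have hj'm := Finset.mem_range.1 hj'
        constructor
        · intro hnot hmem
          apply hnot
          rw [hN']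
          apply Finset.mem_insert.2
          right
          apply Finset.mem_erase.2
          refine ⟨?_, hmem⟩
          intro hpf
          have : b ∈ pairE m j' := hpf ▸ hbf
          rw [mem_pairE hj'm, hbval] at this
          have : j' = j0 := by omega
          exact hj0N (this ▸ hmem)
        · intro hnot hmem
          apply hnot
          rw [hN', Finset.mem_insert] at hmem
          rcases hmem with heq | hmem
          · exfalso
            have : fpt m 0 ∈ pairE m j' := heq ▸ Sym2.mem_mk_left _ _
            rw [mem_pairE hj'm, huval] at this
            omega
          · exact Finset.mem_of_mem_erase hmem
      have hKc' : Kc N' = Kc N := by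
        rw [Kc, Kc]
        congr 1
        exact Finset.filter_congr (fun j' hj' => hmemiff j' hj')
      have hball : 2 * Kc N' + (if Sym2.Mem.other' hbf = fpt m 0 then 1 else 0) ≤ fuel := by
        rw [hKc', if_neg hpu]
        rw [if_pos rfl] at hb
        omega
      obtain ⟨w', hw'⟩ := ih (Sym2.Mem.other' hbf) N' hI' hball h1' h2
      refine ⟨SimpleGraph.Walk.cons (hadj h1 h1') w', ?_⟩
      rw [SimpleGraph.Walk.length_cons]
      omega
    · -- move A : complete the pair of the unmatched point
      have huval : u.val ≠ 0 := fun h => hu (Fin.ext (by rw [h, fpt_val m 0 (by omega)]))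
      set j := (u.val - 1)/2 with hjdef
      have hult : u.val < 2*m+1 := u.isLt
      have hjm : j < m := by omega
      set a := fpt m (2*j+1) with hadef
      set b := fpt m (2*j+2) with hbdef
      have haval : a.val = 2*j+1 := fpt_val m _ (by omega)
      have hbval : b.val = 2*j+2 := fpt_val m _ (by omega)
      have huj : u.val = 2*j+1 ∨ u.val = 2*j+2 := by omega
      have hupair : u ∈ pairE m j := (mem_pairE hjm u).2 (by omega)
      have hj0N : pairE m j ∉ N := fun h => hI.unm _ h hupair
      obtain ⟨q, hqu, hqval, hor⟩ :
          ∃ q : Fin (2*m+1), q ≠ u ∧ (q.val = 2*j+1 ∨ q.val = 2*j+2) ∧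
            ((a = u ∧ b = q) ∨ (a = q ∧ b = u)) := by
        rcases huj with h | h
        · refine ⟨b, ?_, Or.inr hbval, Or.inl ⟨Fin.ext (by rw [haval, h]), rfl⟩⟩
          intro hh
          have := congrArg Fin.val hh
          rw [hbval, h] at this
          omega
        · refine ⟨a, ?_, Or.inl haval, Or.inr ⟨rfl, Fin.ext (by rw [hbval, h])⟩⟩
          intro hh
          have := congrArg Fin.val hh
          rw [haval, h] at this
          omega
      obtain ⟨f, hf, hqf⟩ := hI.cover q hqu
      have harc : ∀ e ∈ N, e ≠ f →
          (∀ v ∈ e, a.val < v.val ∧ v.val < b.val) ∨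
          (∀ v ∈ e, v.val < a.val ∨ b.val < v.val) := by
        intro e he hef
        right
        intro v hv
        have hvu : v ≠ u := fun h => hI.unm e he (h ▸ hv)
        have hvq : v ≠ q := fun h => (hI.disj e he f hf hef v hv) (h ▸ hqf)
        have hvuval : v.val ≠ u.val := fun h => hvu (Fin.ext h)
        have hvqval : v.val ≠ q.val := fun h => hvq (Fin.ext h)
        have : v.val ≠ 2*j+1 ∧ v.val ≠ 2*j+2 := by
          rcases huj with h | h <;> rcases hqval with h' | h' <;>
            constructor <;> omega
        rw [haval, hbval]
        omega
      obtain ⟨hI', hpu, hadj⟩ := step_general σ P hσi hσP hGood hI q hqu f hf hqf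
        a b (by rw [haval, hbval]; omega) hor harc
      set N' := insert s(u,q) (N.erase f) with hN'
      have h1' : IsPAPM P m (Mof σ N') := papm_of_cinv σ P hσi hσP hI'
      have hgpair : s(u, q) = pairE m j := by
        rcases hor with ⟨h1a, h2a⟩ | ⟨h1a, h2a⟩
        · rw [pairE, ← hadef, ← hbdef, ← h1a, ← h2a]
        · rw [pairE, ← hadef, ← hbdef, ← h1a, ← h2a]
          exact Sym2.eq_swap
      have hj_in_T : j ∈ (range m).filter (fun j' => pairE m j' ∉ N) :=
        Finset.mem_filter.2 ⟨Finset.mem_range.2 hjm, hj0N⟩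
      have hfilter : (range m).filter (fun j' => pairE m j' ∉ N') =
          ((range m).filter (fun j' => pairE m j' ∉ N)).erase j := by
        ext j'
        simp only [Finset.mem_filter, Finset.mem_erase, Finset.mem_range]
        constructor
        · rintro ⟨hj'm, hnot⟩
          have hjj : j' ≠ j := by
            intro hh
            subst hh
            exact hnot (hgpair ▸ Finset.mem_insert_self _ _)
          refine ⟨hjj, hj'm, ?_⟩
          intro hin
          apply hnot
          rw [hN']
          apply Finset.mem_insert.2
          right
          apply Finset.mem_erase.2
          refine ⟨?_, hin⟩
          intro hpf
          have : q ∈ pairE m j' := hpf ▸ hqf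
          rw [mem_pairE hj'm] at this
          have : j' = j := by omega
          exact hjj this
        · rintro ⟨hjj, hj'm, hnot⟩
          refine ⟨hj'm, ?_⟩
          intro hin
          rw [hN', Finset.mem_insert] at hin
          rcases hin with heq | hin
          · exact hjj (pairE_inj hj'm hjm (heq.trans hgpair))
          · exact hnot (Finset.mem_of_mem_erase hin)
      have hKpos : 0 < Kc N := Finset.card_pos.2 ⟨j, hj_in_T⟩
      have hKc' : Kc N' = Kc N - 1 := by
        rw [Kc, Kc, hfilter, Finset.card_erase_of_mem hj_in_T]
      have hball : 2 * Kc N' + (if Sym2.Mem.other' hqf = fpt m 0 then 1 else 0) ≤ fuel := by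
        rw [hKc']
        rw [if_neg hu] at hb
        have : (if Sym2.Mem.other' hqf = fpt m 0 then 1 else 0) ≤ 1 := by
          split <;> omega
        omega
      obtain ⟨w', hw'⟩ := ih (Sym2.Mem.other' hqf) N' hI' hball h1' h2
      refine ⟨SimpleGraph.Walk.cons (hadj h1 h1') w', ?_⟩
      rw [SimpleGraph.Walk.length_cons]
      omega

def toF : Sym2 (Fin (2*m+1)) → Finset (Fin (2*m+1)) :=
  Sym2.lift ⟨fun a b => {a, b}, fun a b => Finset.pair_comm a b⟩

lemma mem_toF (v : Fin (2*m+1)) (e : Sym2 (Fin (2*m+1))) : v ∈ toF e ↔ v ∈ e := by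
  induction e using Sym2.inductionOn with
  | hf x y =>
    show v ∈ ({x, y} : Finset _) ↔ _
    rw [Sym2.mem_iff, Finset.mem_insert, Finset.mem_singleton]

lemma card_toF (e : Sym2 (Fin (2*m+1))) (hd : ¬ e.IsDiag) : (toF e).card = 2 := by
  induction e using Sym2.inductionOn with
  | hf x y =>
    rw [Sym2.mk_isDiag_iff] at hd
    show ({x, y} : Finset _).card = 2
    rw [Finset.card_insert_of_notMem (by simpa using hd), Finset.card_singleton]

include hσi hσP hσS in
lemma translateM (M₁ : Finset (Sym2 Pt)) (hM₁ : IsPAPM P m M₁) :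
    ∃ (u : Fin (2*m+1)) (N : Finset (Sym2 (Fin (2*m+1)))),
      CInv σ u N ∧ Mof σ N = M₁ := by
  classical
  set τ : Pt → Fin (2*m+1) := fun p => if h : ∃ i, σ i = p then h.choose else ⟨0, by omega⟩
    with hτdef
  have hτ : ∀ p ∈ P, σ (τ p) = p := by
    intro p hp
    have h : ∃ i, σ i = p := hσS p hp
    simp only [hτdef, dif_pos h]
    exact h.choose_spec
  set N₁ := M₁.image (Sym2.map τ) with hN₁
  have hback : ∀ e ∈ M₁, Sym2.map σ (Sym2.map τ e) = e := by
    intro e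
    induction e using Sym2.inductionOn with
    | hf x y =>
      intro he
      rw [Sym2.map_pair_eq, Sym2.map_pair_eq]
      have hx : x ∈ P := hM₁.endpoints_mem _ he x (Sym2.mem_mk_left _ _)
      have hy : y ∈ P := hM₁.endpoints_mem _ he y (Sym2.mem_mk_right _ _)
      rw [hτ x hx, hτ y hy]
  have hMof : Mof σ N₁ = M₁ := by
    rw [Mof, hN₁, Finset.image_image]
    ext e'
    simp only [Finset.mem_image, Function.comp_apply]
    constructor
    · rintro ⟨e, he, rfl⟩
      rw [hback e he]
      exact he
    · intro he'
      exact ⟨e', he', hback e' he'⟩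
  have hinj1 : Set.InjOn (Sym2.map τ) M₁ := by
    intro e he e' he' h
    have := congrArg (Sym2.map σ) h
    rwa [hback e he, hback e' he'] at this
  -- membership characterisation
  have hmem1 : ∀ ee ∈ N₁, ∃ e ∈ M₁, ee = Sym2.map τ e := by
    intro ee hee
    obtain ⟨e, he, rfl⟩ := Finset.mem_image.1 hee
    exact ⟨e, he, rfl⟩
  have hcard1 : N₁.card = m := by
    rw [hN₁, Finset.card_image_of_injOn hinj1, hM₁.card_eq]
  have hnd1 : ∀ ee ∈ N₁, ¬ ee.IsDiag := by
    intro ee hee hd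
    obtain ⟨e, he, rfl⟩ := hmem1 ee hee
    revert hd he
    induction e using Sym2.inductionOn with
    | hf x y =>
      intro he hd
      rw [Sym2.map_pair_eq, Sym2.mk_isDiag_iff] at hd
      have hx : x ∈ P := hM₁.endpoints_mem _ he x (Sym2.mem_mk_left _ _)
      have hy : y ∈ P := hM₁.endpoints_mem _ he y (Sym2.mem_mk_right _ _)
      have : x = y := by
        rw [← hτ x hx, ← hτ y hy, hd]
      exact hM₁.not_isDiag _ he (Sym2.mk_isDiag_iff.2 this)
  have hdisj1 : ∀ ee ∈ N₁, ∀ ff ∈ N₁, ee ≠ ff → ∀ v ∈ ee, v ∉ ff := by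
    intro ee hee ff hff hne v hvee hvff
    obtain ⟨e, he, rfl⟩ := hmem1 ee hee
    obtain ⟨f, hfm, rfl⟩ := hmem1 ff hff
    have hef : e ≠ f := fun h => hne (by rw [h])
    obtain ⟨xp, hxp, rfl⟩ := Sym2.mem_map.1 hvee
    obtain ⟨yq, hyq, hq⟩ := Sym2.mem_map.1 hvff
    have hxP : xp ∈ P := hM₁.endpoints_mem _ he _ hxp
    have hyP : yq ∈ P := hM₁.endpoints_mem _ hfm _ hyq
    have : yq = xp := by
      rw [← hτ xp hxP, ← hτ yq hyP, hq]
    subst this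
    exact hM₁.pairwise_disjoint_endpoints e he f hfm hef yq hxp hyq
  -- find the unmatched point by counting
  set Cov := N₁.biUnion toF with hCov
  have hCovCard : Cov.card = 2*m := by
    rw [hCov, Finset.card_biUnion]
    · calc ∑ e ∈ N₁, (toF e).card = ∑ e ∈ N₁, 2 := by
            apply Finset.sum_congr rfl
            intro e he
            exact card_toF e (hnd1 e he)
      _ = 2*m := by rw [Finset.sum_const, hcard1]; ring
    · intro e he f hf hef
      rw [Function.onFun, Finset.disjoint_left]
      intro v hv hv'
      exact hdisj1 e he f hf hef v ((mem_toF v e).1 hv) ((mem_toF v f).1 hv')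
  set W := (Finset.univ : Finset (Fin (2*m+1))) \ Cov with hW
  have hWcard : W.card = 1 := by
    rw [hW, Finset.card_sdiff_of_subset (Finset.subset_univ _), Finset.card_univ, Fintype.card_fin,
      hCovCard]
    omega
  obtain ⟨u, hu⟩ := Finset.card_eq_one.1 hWcard
  have huW : u ∈ W := hu ▸ Finset.mem_singleton_self u
  have hunm : ∀ e ∈ N₁, u ∉ e := by
    intro e he hue
    have : u ∈ Cov := Finset.mem_biUnion.2 ⟨e, he, (mem_toF u e).2 hue⟩
    rw [hW, Finset.mem_sdiff] at huW
    exact huW.2 this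
  have hcov : ∀ v : Fin (2*m+1), v ≠ u → ∃ e ∈ N₁, v ∈ e := by
    intro v hv
    have : v ∉ W := by
      rw [hu, Finset.mem_singleton]
      exact hv
    rw [hW, Finset.mem_sdiff] at this
    push_neg at this
    obtain ⟨e, he, hve⟩ := Finset.mem_biUnion.1 (this (Finset.mem_univ v))
    exact ⟨e, he, (mem_toF v e).1 hve⟩
  refine ⟨u, N₁, ⟨hcard1, hnd1, hdisj1, hcov, hunm, ?_⟩, hMof⟩
  intro ee hee ff hff hne
  obtain ⟨e, he, rfl⟩ := hmem1 ee hee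
  obtain ⟨f, hfm, rfl⟩ := hmem1 ff hff
  rw [hback e he, hback f hfm]
  exact hM₁.plane e he f hfm (fun h => hne (by rw [h]))

end Main


/-- For `2m+1` points in convex position there is a plane almost perfect matching
`M_conv` all of whose edges lie on the boundary of the convex hull, such that every
plane almost perfect matching can be flipped to `M_conv` in at most `2n` flips;
consequently the diameter of the flip graph is `O(n)` (at most `4n`). -/
theorem flip_diameter_convex_upper_bound (m : ℕ) (P : Finset Pt)
    (hcard : P.card = 2 * m + 1) (hconv : ConvexPosition P) (hgp : NoThreeCollinear P) :
    ∃ (Mconv : Finset (Sym2 Pt)) (hMconv : IsPAPM P m Mconv),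
      (∀ e ∈ Mconv, eseg e ⊆ frontier (convexHull ℝ (P : Set Pt))) ∧
      (∀ (M₁ : Finset (Sym2 Pt)) (hM₁ : IsPAPM P m M₁),
        ∃ w : (GM P m).Walk ⟨M₁, hM₁⟩ ⟨Mconv, hMconv⟩, w.length ≤ 2 * (2 * m + 1)) ∧
      (∀ (M₁ M₂ : Finset (Sym2 Pt)) (hM₁ : IsPAPM P m M₁) (hM₂ : IsPAPM P m M₂),
        ∃ w : (GM P m).Walk ⟨M₁, hM₁⟩ ⟨M₂, hM₂⟩, w.length ≤ 4 * (2 * m + 1)) := by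
  obtain ⟨σ, hσi, hσP, hσS, hGood⟩ := exists_order m P hcard hconv hgp
  have hMc : IsPAPM P m (Mof σ (NconvC m)) :=
    papm_of_cinv σ P hσi hσP (cinv_conv σ hGood)
  have hB2 : ∀ (M₁ : Finset (Sym2 Pt)) (hM₁ : IsPAPM P m M₁),
      ∃ w : (GM P m).Walk ⟨M₁, hM₁⟩ ⟨Mof σ (NconvC m), hMc⟩, w.length ≤ 2 * (2 * m + 1) := by
    intro M₁ hM₁
    obtain ⟨u, N, hCI, rfl⟩ := translateM σ P hσi hσP hσS M₁ hM₁
    have hKle : Kc N ≤ m := by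
      have := Finset.card_filter_le (range m) (fun j => pairE m j ∉ N)
      rw [Finset.card_range] at this
      exact this
    have hbound : 2 * Kc N + (if u = fpt m 0 then 1 else 0) ≤ 2 * (2 * m + 1) := by
      split <;> omega
    exact reach σ P hσi hσP hGood (2 * (2 * m + 1)) u N hCI hbound hM₁ hMc
  refine ⟨Mof σ (NconvC m), hMc, ?_, hB2, ?_⟩
  · -- edges of Mconv lie on the frontier of the convex hull
    intro e he
    obtain ⟨e', he', rfl⟩ := Finset.mem_image.1 he
    obtain ⟨j, hj, rfl⟩ := Finset.mem_image.1 he'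
    have hjm : j < m := Finset.mem_range.1 hj
    set fa := fpt m (2*j+1) with hfa
    set fb := fpt m (2*j+2) with hfb
    have hfav : fa.val = 2*j+1 := fpt_val m _ (by omega)
    have hfbv : fb.val = 2*j+2 := fpt_val m _ (by omega)
    have heq : Sym2.map σ (pairE m j) = s(σ fa, σ fb) := by
      rw [pairE, Sym2.map_pair_eq]
    rw [heq]
    show openSegment ℝ (σ fa) (σ fb) ⊆ frontier (convexHull ℝ (P : Set Pt))
    apply openSegment_subset_frontier (hσP fa) (hσP fb)
    · intro h
      have := hσi h
      have := congrArg Fin.val this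
      rw [hfav, hfbv] at this
      omega
    · intro r hr hra hrb
      obtain ⟨v, rfl⟩ := hσS r hr
      have hva : v.val ≠ 2*j+1 := by
        intro h
        exact hra (congrArg σ (Fin.ext (by rw [h, hfav])))
      have hvb : v.val ≠ 2*j+2 := by
        intro h
        exact hrb (congrArg σ (Fin.ext (by rw [h, hfbv])))
      apply side_out σ hGood (by rw [hfav, hfbv]; omega)
      rw [hfav, hfbv]
      omega
  · -- diameter bound
    intro M₁ M₂ hM₁ hM₂
    obtain ⟨w₁, hw₁⟩ := hB2 M₁ hM₁
    obtain ⟨w₂, hw₂⟩ := hB2 M₂ hM₂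
    refine ⟨w₁.append w₂.reverse, ?_⟩
    rw [SimpleGraph.Walk.length_append, SimpleGraph.Walk.length_reverse]
    omega
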